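/- Let M be a finitely generated graded module of projective dimension p over the standard graded polynomial ring S = k[x_1,…,x_n], and suppose f is a nonzero homogeneous element of Ann(M) of degree d. Then reg(M) ≤ max{ max_{0 ≤ i ≤ p−1} { T_i(M) − i }, T_{p−1}(M) + d − p }. -/

import Mathlib

open MvPolynomial

/-- The degree-`d` homogeneous piece of the standard graded polynomial ring
`S = k[x_1,…,x_n]` (each variable of degree one), with pieces indexed by `ℤ`
(zero in negative degrees). -/
noncomputable def polyPiece (k : Type) [Field k] (n : ℕ) (d : ℤ) :
    Submodule k (MvPolynomial (Fin n) k) :=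
  if 0 ≤ d then MvPolynomial.homogeneousSubmodule (Fin n) k d.toNat else ⊥

/-- The irrelevant maximal ideal `(x_1,…,x_n)` of `S = k[x_1,…,x_n]`. -/
noncomputable def maxIdeal (k : Type) [Field k] (n : ℕ) : Ideal (MvPolynomial (Fin n) k) :=
  Ideal.span (Set.range MvPolynomial.X)

/-- The degree-`d` piece of the graded free module `⊕_{t : ι} S(-dg t)`,
realized concretely as `ι →₀ S`. -/
noncomputable def freePiece (k : Type) [Field k] (n : ℕ) {ι : Type} (dg : ι → ℤ) (d : ℤ) :
    Submodule k (ι →₀ MvPolynomial (Fin n) k) :=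
  ⨅ t : ι, (polyPiece k n (d - dg t)).comap
    ((Finsupp.lapply t : (ι →₀ MvPolynomial (Fin n) k) →ₗ[MvPolynomial (Fin n) k]
        MvPolynomial (Fin n) k).restrictScalars k)

/-- `piece` is a grading on the `S`-module `M`, making `M` a graded `S`-module. -/
structure IsGrading (k : Type) [Field k] (n : ℕ) (M : Type) [AddCommGroup M]
    [Module (MvPolynomial (Fin n) k) M] [Module k M]
    [IsScalarTower k (MvPolynomial (Fin n) k) M]
    (piece : ℤ → Submodule k M) : Prop where
  internal : DirectSum.IsInternal piece
  smul_mem : ∀ (i : ℕ) (d : ℤ) ⦃s : MvPolynomial (Fin n) k⦄,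
      s ∈ MvPolynomial.homogeneousSubmodule (Fin n) k i →
      ∀ ⦃m : M⦄, m ∈ piece d → s • m ∈ piece ((i : ℤ) + d)

/-- A minimal graded free resolution `⋯ → F_1 → F_0 → M → 0` of the graded
`S`-module `M` (with grading `piece`), where `F_i = ⊕_{t : ι i} S(-dg i t)` is
realized as `ι i →₀ S`.  All the `ι i` are finite, so `M` is finitely generated. -/
structure MinFreeRes (k : Type) [Field k] (n : ℕ) (M : Type) [AddCommGroup M]
    [Module (MvPolynomial (Fin n) k) M] [Module k M]
    [IsScalarTower k (MvPolynomial (Fin n) k) M]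
    (piece : ℤ → Submodule k M) where
  ι : ℕ → Type
  fin : ∀ i, Fintype (ι i)
  dg : ∀ i, ι i → ℤ
  diff : ∀ i, (ι (i + 1) →₀ MvPolynomial (Fin n) k) →ₗ[MvPolynomial (Fin n) k]
      (ι i →₀ MvPolynomial (Fin n) k)
  aug : (ι 0 →₀ MvPolynomial (Fin n) k) →ₗ[MvPolynomial (Fin n) k] M
  aug_surjective : Function.Surjective aug
  ker_aug : LinearMap.ker aug = LinearMap.range (diff 0)
  exact : ∀ i, LinearMap.ker (diff i) = LinearMap.range (diff (i + 1))
  diff_graded : ∀ i (d : ℤ) x, x ∈ freePiece k n (dg (i + 1)) d →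
      diff i x ∈ freePiece k n (dg i) d
  aug_graded : ∀ (d : ℤ) x, x ∈ freePiece k n (dg 0) d → aug x ∈ piece d
  minimal : ∀ i, LinearMap.range (diff i) ≤
      maxIdeal k n • (⊤ : Submodule (MvPolynomial (Fin n) k)
        (ι i →₀ MvPolynomial (Fin n) k))

namespace MinFreeRes

variable {k : Type} [Field k] {n : ℕ} {M : Type} [AddCommGroup M]
  [Module (MvPolynomial (Fin n) k) M] [Module k M]
  [IsScalarTower k (MvPolynomial (Fin n) k) M] {piece : ℤ → Submodule k M}

/-- The resolution has length exactly `p`; equivalently, `pd_S M = p`. -/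
def lengthEq (R : MinFreeRes k n M piece) (p : ℕ) : Prop :=
  Nonempty (R.ι p) ∧ ∀ i, p < i → IsEmpty (R.ι i)

/-- The `i`-th maximal graded shift `T_i(M)`: the largest degree of a generator of
the `i`-th term of the minimal graded free resolution of `M` (equivalently, the top
degree of `Tor_i^S(M,k)`), and `⊥` if that term vanishes. -/
noncomputable def T (R : MinFreeRes k n M piece) (i : ℕ) : WithBot ℤ :=
  letI := R.fin i
  (Finset.univ : Finset (R.ι i)).sup fun t => ((R.dg i t : ℤ) : WithBot ℤ)

/-- The Castelnuovo–Mumford regularity `reg M = max_{0 ≤ i ≤ p} (T_i(M) - i)`,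
where `p = pd M`. -/
noncomputable def reg (R : MinFreeRes k n M piece) (p : ℕ) : WithBot ℤ :=
  (Finset.range (p + 1)).sup fun i => R.T i + ((-(i : ℤ) : ℤ) : WithBot ℤ)

end MinFreeRes

/-- The canonical degree-`d` graded piece of `S/I`. -/
noncomputable def quotPiece (k : Type) [Field k] (n : ℕ) (I : Ideal (MvPolynomial (Fin n) k))
    (d : ℤ) : Submodule k (MvPolynomial (Fin n) k ⧸ I) :=
  (polyPiece k n d).map (Ideal.Quotient.mkₐ k I).toLinearMap

/-- `I` is a homogeneous ideal of `S = k[x_1,…,x_n]` for the standard grading. -/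
def IsHomogeneousIdeal (k : Type) [Field k] (n : ℕ)
    (I : Ideal (MvPolynomial (Fin n) k)) : Prop :=
  ∀ f ∈ I, ∀ d : ℕ, MvPolynomial.homogeneousComponent d f ∈ I

/-- The depth of `M` (w.r.t. the homogeneous maximal ideal): the supremum of the
lengths of `M`-regular sequences contained in `(x_1,…,x_n)`. -/
noncomputable def moduleDepth (k : Type) [Field k] (n : ℕ) (M : Type) [AddCommGroup M]
    [Module (MvPolynomial (Fin n) k) M] : ℕ∞ :=
  sSup {r : ℕ∞ | ∃ L : List (MvPolynomial (Fin n) k), (L.length : ℕ∞) = r ∧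
    (∀ f ∈ L, f ∈ maxIdeal k n) ∧ RingTheory.Sequence.IsRegular M L}

/-- The Krull dimension of the module `M`, i.e. `dim (S / ann M)`. -/
noncomputable def moduleDim (k : Type) [Field k] (n : ℕ) (M : Type) [AddCommGroup M]
    [Module (MvPolynomial (Fin n) k) M] : WithBot ℕ∞ :=
  ringKrullDim (MvPolynomial (Fin n) k ⧸ Module.annihilator (MvPolynomial (Fin n) k) M)


variable {k : Type} [Field k] {n : ℕ}

lemma polyPiece_neg {d : ℤ} (hd : d < 0) : polyPiece k n d = ⊥ := by
  rw [polyPiece, if_neg (by omega)]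

lemma polyPiece_mul {a : ℕ} {b : ℤ} {c f : MvPolynomial (Fin n) k}
    (hc : c ∈ homogeneousSubmodule (Fin n) k a) (hf : f ∈ polyPiece k n b) :
    c * f ∈ polyPiece k n (a + b) := by
  by_cases hb : 0 ≤ b
  · rw [polyPiece, if_pos hb] at hf
    rw [polyPiece, if_pos (by omega)]
    have h : ((a : ℤ) + b).toNat = a + b.toNat := by omega
    rw [h]
    exact homogeneousSubmodule_mul a b.toNat (Submodule.mul_mem_mul hc hf)
  · rw [polyPiece, if_neg hb, Submodule.mem_bot] at hf
    rw [hf, mul_zero]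
    exact zero_mem _

lemma mem_freePiece_iff {ι : Type} {dg : ι → ℤ} {e : ℤ} {x : ι →₀ MvPolynomial (Fin n) k} :
    x ∈ freePiece k n dg e ↔ ∀ t, x t ∈ polyPiece k n (e - dg t) := by
  simp [freePiece, Submodule.mem_iInf, Submodule.mem_comap]

lemma single_one_mem_freePiece {ι : Type} {dg : ι → ℤ} (s : ι) :
    Finsupp.single s (1 : MvPolynomial (Fin n) k) ∈ freePiece k n dg (dg s) := by
  rw [mem_freePiece_iff]
  intro t
  rcases eq_or_ne t s with rfl | h
  · simp only [Finsupp.single_eq_same, sub_self, polyPiece, if_pos le_rfl]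
    simp
    exact ⟨1, map_one _⟩
  · rw [Finsupp.single_eq_of_ne' (Ne.symm h)]
    exact zero_mem _

lemma smul_mem_freePiece {ι : Type} {dg : ι → ℤ} {a b : ℤ}
    {c : MvPolynomial (Fin n) k} {x : ι →₀ MvPolynomial (Fin n) k}
    (hc : c ∈ polyPiece k n a) (hx : x ∈ freePiece k n dg b) :
    c • x ∈ freePiece k n dg (a + b) := by
  by_cases ha : 0 ≤ a
  · rw [mem_freePiece_iff] at hx ⊢
    intro t
    rw [Finsupp.smul_apply, smul_eq_mul]
    have h1 : c ∈ homogeneousSubmodule (Fin n) k a.toNat := by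
      rwa [polyPiece, if_pos ha] at hc
    have := polyPiece_mul h1 (hx t)
    have h2 : (a.toNat : ℤ) + (b - dg t) = a + b - dg t := by omega
    rwa [h2] at this
  · rw [polyPiece, if_neg ha, Submodule.mem_bot] at hc
    rw [hc, zero_smul]
    exact zero_mem _

lemma finsupp_eq_sum {ι : Type} [Fintype ι] (x : ι →₀ MvPolynomial (Fin n) k) :
    x = ∑ s, (x s) • Finsupp.single s (1 : MvPolynomial (Fin n) k) := by
  ext t
  rw [Finsupp.finset_sum_apply, Finset.sum_eq_single t]
  · simp
  · intro b _ hb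
    simp [Finsupp.single_eq_of_ne' hb]
  · simp

lemma map_freePiece {ι κ : Type} [Fintype ι] {dgι : ι → ℤ} {dgκ : κ → ℤ} {d : ℤ}
    (h : (ι →₀ MvPolynomial (Fin n) k) →ₗ[MvPolynomial (Fin n) k]
      (κ →₀ MvPolynomial (Fin n) k))
    (hb : ∀ s, h (Finsupp.single s 1) ∈ freePiece k n dgκ (dgι s + d))
    {e : ℤ} {x : ι →₀ MvPolynomial (Fin n) k} (hx : x ∈ freePiece k n dgι e) :
    h x ∈ freePiece k n dgκ (e + d) := by
  rw [finsupp_eq_sum x, map_sum]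
  refine Submodule.sum_mem _ fun s _ => ?_
  rw [map_smul]
  have h1 := smul_mem_freePiece ((mem_freePiece_iff.mp hx) s) (hb s)
  have h2 : e - dgι s + (dgι s + d) = e + d := by ring
  rwa [h2] at h1

/-- The degree-`e` component selector on polynomials (ℤ-indexed). -/
noncomputable def compPoly (e : ℤ) :
    MvPolynomial (Fin n) k →ₗ[k] MvPolynomial (Fin n) k :=
  if 0 ≤ e then homogeneousComponent e.toNat else 0

lemma compPoly_mem (e : ℤ) (f : MvPolynomial (Fin n) k) :
    compPoly e f ∈ polyPiece k n e := by
  by_cases he : 0 ≤ e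
  · rw [compPoly, if_pos he, polyPiece, if_pos he]
    exact homogeneousComponent_mem _ _
  · rw [compPoly, if_neg he]
    exact zero_mem _

lemma compPoly_of_mem {e e' : ℤ} {f : MvPolynomial (Fin n) k}
    (hf : f ∈ polyPiece k n e') :
    compPoly e f = if e = e' then f else 0 := by
  by_cases he' : 0 ≤ e'
  · rw [polyPiece, if_pos he'] at hf
    by_cases he : 0 ≤ e
    · rw [compPoly, if_pos he]
      rw [homogeneousComponent_of_mem (m := e.toNat) hf]
      congr 1
      simp only [eq_iff_iff]
      omega
    · rw [compPoly, if_neg he, LinearMap.zero_apply, if_neg (by omega)]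
  · rw [polyPiece, if_neg he', Submodule.mem_bot] at hf
    subst hf
    simp

/-- The degree-`e` component selector on the graded free module. -/
noncomputable def compF {ι : Type} [Fintype ι] (dg : ι → ℤ) (e : ℤ) :
    (ι →₀ MvPolynomial (Fin n) k) →ₗ[k] (ι →₀ MvPolynomial (Fin n) k) :=
  (Finsupp.linearEquivFunOnFinite k _ ι).symm.toLinearMap ∘ₗ
    (LinearMap.pi fun t => (compPoly (e - dg t)) ∘ₗ LinearMap.proj t) ∘ₗ
    (Finsupp.linearEquivFunOnFinite k _ ι).toLinearMap

lemma compF_apply {ι : Type} [Fintype ι] (dg : ι → ℤ) (e : ℤ)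
    (x : ι →₀ MvPolynomial (Fin n) k) (t : ι) :
    compF dg e x t = compPoly (e - dg t) (x t) := rfl

lemma compF_mem {ι : Type} [Fintype ι] (dg : ι → ℤ) (e : ℤ)
    (x : ι →₀ MvPolynomial (Fin n) k) : compF dg e x ∈ freePiece k n dg e := by
  rw [mem_freePiece_iff]
  intro t
  rw [compF_apply]
  exact compPoly_mem _ _

lemma compF_of_mem {ι : Type} [Fintype ι] {dg : ι → ℤ} {e e' : ℤ}
    {x : ι →₀ MvPolynomial (Fin n) k} (hx : x ∈ freePiece k n dg e') :
    compF dg e x = if e = e' then x else 0 := by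
  ext t
  rw [compF_apply, compPoly_of_mem ((mem_freePiece_iff.mp hx) t)]
  have h : e - dg t = e' - dg t ↔ e = e' := by omega
  split_ifs with h1 h2 h2
  · rfl
  · exact absurd (h.mp h1) h2
  · exact absurd (h.mpr h2) h1
  · simp

lemma compPoly_sum_eq {E : Finset ℤ} {f : MvPolynomial (Fin n) k} {c : ℤ} {N : ℕ}
    (hdeg : f.totalDegree ≤ N) (hE : ∀ m : ℕ, m ≤ N → c + (m : ℤ) ∈ E) :
    ∑ e ∈ E, compPoly (e - c) f = f := by
  classical
  have hsub : (Finset.range (N + 1)).image (fun m : ℕ => c + (m : ℤ)) ⊆ E := by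
    intro e he
    rw [Finset.mem_image] at he
    obtain ⟨m, hm, rfl⟩ := he
    exact hE m (by simpa using Nat.lt_succ_iff.mp (Finset.mem_range.mp hm))
  rw [← Finset.sum_subset hsub]
  · rw [Finset.sum_image (fun a _ b _ h => by omega)]
    have key : ∀ m ∈ Finset.range (N + 1),
        compPoly (c + (m : ℤ) - c) f = homogeneousComponent m f := by
      intro m _
      have h : c + (m : ℤ) - c = (m : ℤ) := by ring
      rw [h, compPoly, if_pos (by positivity), Int.toNat_natCast]
    rw [Finset.sum_congr rfl key,
      ← Finset.sum_subset (Finset.range_subset_range.mpr (by omega : f.totalDegree + 1 ≤ N + 1))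
        (fun m _ hm => homogeneousComponent_eq_zero _ _
          (by simpa [Nat.lt_succ_iff, not_le] using
            lt_of_lt_of_le (Nat.lt_succ_self _) (le_of_not_gt (Finset.mem_range.not.mp hm))))]
    exact sum_homogeneousComponent f
  · intro e heE heE'
    by_cases hne : 0 ≤ e - c
    · rw [compPoly, if_pos hne]
      apply homogeneousComponent_eq_zero
      by_contra hcon
      push_neg at hcon
      exact heE' (by
        rw [Finset.mem_image]
        exact ⟨(e - c).toNat, Finset.mem_range.mpr (by omega), by omega⟩)
    · rw [compPoly, if_neg hne, LinearMap.zero_apply]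

lemma compF_sum {ι : Type} [Fintype ι] (dg : ι → ℤ)
    (x : ι →₀ MvPolynomial (Fin n) k) :
    ∃ E : Finset ℤ, (∑ e ∈ E, compF dg e x = x) ∧ ∀ e ∉ E, compF dg e x = 0 := by
  classical
  set N := Finset.univ.sup (fun t => (x t).totalDegree) with hN
  have hdeg : ∀ t, (x t).totalDegree ≤ N :=
    fun t => Finset.le_sup (f := fun t => (x t).totalDegree) (Finset.mem_univ t)
  refine ⟨Finset.image₂ (fun (t : ι) (m : ℕ) => dg t + (m : ℤ)) Finset.univ
    (Finset.range (N + 1)), ?_, ?_⟩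
  · ext t : 1
    rw [Finsupp.finset_sum_apply]
    simp only [compF_apply]
    exact compPoly_sum_eq (hdeg t) (fun m hm => Finset.mem_image₂.mpr
      ⟨t, Finset.mem_univ t, m, Finset.mem_range.mpr (by omega), rfl⟩)
  · intro e he
    ext t : 1
    rw [compF_apply]
    simp only [Finsupp.coe_zero, Pi.zero_apply]
    by_cases hne : 0 ≤ e - dg t
    · rw [compPoly, if_pos hne]
      apply homogeneousComponent_eq_zero
      by_contra hcon
      push_neg at hcon
      have hdt := hdeg t
      exact he (Finset.mem_image₂.mpr
        ⟨t, Finset.mem_univ t, (e - dg t).toNat, Finset.mem_range.mpr (by omega), by omega⟩)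
    · rw [compPoly, if_neg hne, LinearMap.zero_apply]

lemma graded_preimage {ι κ : Type} [Fintype ι] [Fintype κ] {dgι : ι → ℤ} {dgκ : κ → ℤ}
    (D : (ι →₀ MvPolynomial (Fin n) k) →ₗ[MvPolynomial (Fin n) k]
      (κ →₀ MvPolynomial (Fin n) k))
    (hD : ∀ (e : ℤ) x, x ∈ freePiece k n dgι e → D x ∈ freePiece k n dgκ e)
    {e : ℤ} {y : κ →₀ MvPolynomial (Fin n) k} (hy : y ∈ freePiece k n dgκ e)
    (hrange : y ∈ LinearMap.range D) :
    ∃ x ∈ freePiece k n dgι e, D x = y := by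
  obtain ⟨x0, rfl⟩ := hrange
  refine ⟨compF dgι e x0, compF_mem _ _ _, ?_⟩
  obtain ⟨E, hEsum, hEzero⟩ := compF_sum dgι x0
  have h1 : D x0 = ∑ e' ∈ E, D (compF dgι e' x0) := by rw [← map_sum, hEsum]
  have h2 : compF dgκ e (D x0) = D x0 := by rw [compF_of_mem hy, if_pos rfl]
  have h3 : compF dgκ e (D x0) = ∑ e' ∈ E, compF dgκ e (D (compF dgι e' x0)) := by
    rw [h1, map_sum]
  have h4 : ∀ e' ∈ E, compF dgκ e (D (compF dgι e' x0)) =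
      if e = e' then D (compF dgι e' x0) else 0 :=
    fun e' _ => compF_of_mem (hD e' _ (compF_mem _ _ _))
  rw [Finset.sum_congr rfl h4, Finset.sum_ite_eq E e
    (fun e' => D (compF dgι e' x0))] at h3
  by_cases he : e ∈ E
  · rw [if_pos he] at h3
    rw [← h3, h2]
  · rw [if_neg he] at h3
    rw [hEzero e he, map_zero, ← h3, h2]

lemma exists_lift {ι κ κ' : Type} [Fintype ι] [Fintype κ] [Fintype κ']
    {dgι : ι → ℤ} {dgκ : κ → ℤ} {dgκ' : κ' → ℤ} {d : ℕ}
    (D : (κ' →₀ MvPolynomial (Fin n) k) →ₗ[MvPolynomial (Fin n) k]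
      (κ →₀ MvPolynomial (Fin n) k))
    (hD : ∀ (e : ℤ) x, x ∈ freePiece k n dgκ' e → D x ∈ freePiece k n dgκ e)
    (ψ : (ι →₀ MvPolynomial (Fin n) k) →ₗ[MvPolynomial (Fin n) k]
      (κ →₀ MvPolynomial (Fin n) k))
    (hψg : ∀ s, ψ (Finsupp.single s 1) ∈ freePiece k n dgκ (dgι s + d))
    (hψr : ∀ x, ψ x ∈ LinearMap.range D) :
    ∃ h : (ι →₀ MvPolynomial (Fin n) k) →ₗ[MvPolynomial (Fin n) k]
      (κ' →₀ MvPolynomial (Fin n) k),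
      (∀ s, h (Finsupp.single s 1) ∈ freePiece k n dgκ' (dgι s + d)) ∧
      ∀ x, D (h x) = ψ x := by
  classical
  have hv : ∀ s : ι, ∃ v ∈ freePiece k n dgκ' (dgι s + d),
      D v = ψ (Finsupp.single s 1) :=
    fun s => graded_preimage D hD (hψg s) (hψr _)
  choose v hvmem hveq using hv
  refine ⟨Finsupp.linearCombination (MvPolynomial (Fin n) k) v, ?_, ?_⟩
  · intro s
    rw [Finsupp.linearCombination_single, one_smul]
    exact hvmem s
  · suffices h : D ∘ₗ Finsupp.linearCombination (MvPolynomial (Fin n) k) v = ψ by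
      intro x
      exact DFunLike.congr_fun h x
    apply Finsupp.lhom_ext
    intro s b
    have hb : Finsupp.single s b = b • Finsupp.single s (1 : MvPolynomial (Fin n) k) := by
      rw [Finsupp.smul_single, smul_eq_mul, mul_one]
    rw [LinearMap.comp_apply, hb, map_smul, map_smul, map_smul,
      Finsupp.linearCombination_single, one_smul, hveq]

lemma MinFreeRes.homotopy {k : Type} [Field k] {n : ℕ} {M : Type} [AddCommGroup M]
    [Module (MvPolynomial (Fin n) k) M] [Module k M]
    [IsScalarTower k (MvPolynomial (Fin n) k) M] {pM : ℤ → Submodule k M}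
    (RM : MinFreeRes k n M pM)
    (f : MvPolynomial (Fin n) k) (d : ℕ)
    (hfhom : f ∈ MvPolynomial.homogeneousSubmodule (Fin n) k d)
    (hfann : f ∈ Module.annihilator (MvPolynomial (Fin n) k) M) (i : ℕ) :
    ∃ (h : (RM.ι i →₀ MvPolynomial (Fin n) k) →ₗ[MvPolynomial (Fin n) k]
        (RM.ι (i+1) →₀ MvPolynomial (Fin n) k))
      (h' : (RM.ι (i+1) →₀ MvPolynomial (Fin n) k) →ₗ[MvPolynomial (Fin n) k]
        (RM.ι (i+2) →₀ MvPolynomial (Fin n) k)),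
      (∀ s, h (Finsupp.single s 1) ∈ freePiece k n (RM.dg (i+1)) (RM.dg i s + d)) ∧
      (∀ s, h' (Finsupp.single s 1) ∈ freePiece k n (RM.dg (i+2)) (RM.dg (i+1) s + d)) ∧
      (∀ x, RM.diff (i+1) (h' x) = f • x - h (RM.diff i x)) := by
  letI : ∀ j, Fintype (RM.ι j) := RM.fin
  have hfp : f ∈ polyPiece k n (d : ℤ) := by
    rw [polyPiece, if_pos (by positivity), Int.toNat_natCast]
    exact hfhom
  have hsm : ∀ (j : ℕ) (s : RM.ι j), f • Finsupp.single s (1 : MvPolynomial (Fin n) k)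
      ∈ freePiece k n (RM.dg j) (RM.dg j s + d) := by
    intro j s
    have h1 := smul_mem_freePiece hfp (single_one_mem_freePiece (dg := RM.dg j) s)
    rwa [add_comm] at h1
  induction i with
  | zero =>
    obtain ⟨h0, hb0, he0⟩ := exists_lift (RM.diff 0) (RM.diff_graded 0)
      (LinearMap.lsmul (MvPolynomial (Fin n) k) _ f)
      (fun s => by rw [LinearMap.lsmul_apply]; exact hsm 0 s)
      (fun x => by
        rw [← RM.ker_aug, LinearMap.mem_ker, LinearMap.lsmul_apply, map_smul,
          Module.mem_annihilator.mp hfann])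
    obtain ⟨h1, hb1, he1⟩ := exists_lift (RM.diff 1) (RM.diff_graded 1)
      (LinearMap.lsmul (MvPolynomial (Fin n) k) _ f - (h0 ∘ₗ RM.diff 0))
      (fun s => by
        rw [LinearMap.sub_apply, LinearMap.lsmul_apply, LinearMap.comp_apply]
        exact sub_mem (hsm 1 s)
          (map_freePiece h0 hb0 (RM.diff_graded 0 _ _ (single_one_mem_freePiece s))))
      (fun x => by
        rw [← RM.exact 0, LinearMap.mem_ker, LinearMap.sub_apply, LinearMap.lsmul_apply,
          LinearMap.comp_apply, map_sub, map_smul, he0, LinearMap.lsmul_apply, sub_self])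
    refine ⟨h0, h1, hb0, hb1, fun x => ?_⟩
    rw [he1, LinearMap.sub_apply, LinearMap.lsmul_apply, LinearMap.comp_apply]
  | succ i ih =>
    obtain ⟨h, h', hbg, hbg', hrel⟩ := ih
    obtain ⟨h'', hb'', he''⟩ := exists_lift (RM.diff (i+2)) (RM.diff_graded (i+2))
      (LinearMap.lsmul (MvPolynomial (Fin n) k) _ f - (h' ∘ₗ RM.diff (i+1)))
      (fun s => by
        rw [LinearMap.sub_apply, LinearMap.lsmul_apply, LinearMap.comp_apply]
        exact sub_mem (hsm (i+2) s)
          (map_freePiece h' hbg' (RM.diff_graded (i+1) _ _ (single_one_mem_freePiece s))))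
      (fun x => by
        rw [← RM.exact (i+1), LinearMap.mem_ker, LinearMap.sub_apply, LinearMap.lsmul_apply,
          LinearMap.comp_apply, map_sub, map_smul, hrel]
        have hd2 : RM.diff i (RM.diff (i+1) x) = 0 := by
          have hm : RM.diff (i+1) x ∈ LinearMap.ker (RM.diff i) := by
            rw [RM.exact i]
            exact ⟨x, rfl⟩
          exact hm
        rw [hd2, map_zero, sub_sub_cancel])
    refine ⟨h', h'', hbg', hb'', fun x => ?_⟩
    rw [he'', LinearMap.sub_apply, LinearMap.lsmul_apply, LinearMap.comp_apply]

/-- If `M` is a finitely generated graded `S`-module of projective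
dimension `p` and `f` is a nonzero homogeneous element of `Ann M` of degree `d`,
then `reg M ≤ max { max_{0 ≤ i ≤ p-1} (T_i(M) - i), T_{p-1}(M) + d - p }`. -/
theorem stmt8 (k : Type) [Field k] (n : ℕ)
    (M : Type) [AddCommGroup M] [Module (MvPolynomial (Fin n) k) M] [Module k M]
    [IsScalarTower k (MvPolynomial (Fin n) k) M]
    (pM : ℤ → Submodule k M) (hgrM : IsGrading k n M pM)
    (RM : MinFreeRes k n M pM) (p : ℕ) (hp : RM.lengthEq p)
    (f : MvPolynomial (Fin n) k) (hf0 : f ≠ 0) (d : ℕ)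
    (hfhom : f ∈ MvPolynomial.homogeneousSubmodule (Fin n) k d)
    (hfann : f ∈ Module.annihilator (MvPolynomial (Fin n) k) M) :
    RM.reg p ≤ max
      ((Finset.range p).sup fun i => RM.T i + ((-(i : ℤ) : ℤ) : WithBot ℤ))
      (RM.T (p - 1) + (((d : ℤ) - (p : ℤ) : ℤ) : WithBot ℤ)) := by
  letI : ∀ j, Fintype (RM.ι j) := RM.fin
  rcases Nat.eq_zero_or_pos p with rfl | hppos
  · -- p = 0 : contradiction, M would be free and nonzero but annihilated by f ≠ 0
    obtain ⟨⟨t0⟩, hemp⟩ := hp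
    have hr : f • Finsupp.single t0 (1 : MvPolynomial (Fin n) k)
        ∈ LinearMap.range (RM.diff 0) := by
      rw [← RM.ker_aug, LinearMap.mem_ker, map_smul, Module.mem_annihilator.mp hfann]
    obtain ⟨y, hy⟩ := hr
    have hy0 : y = 0 := by
      ext s
      exact ((hemp 1 one_pos).false s).elim
    rw [hy0, map_zero] at hy
    have hf : f = 0 := by
      have := congrArg (fun z => z t0) hy
      simpa using this.symm
    exact (hf0 hf).elim
  · obtain ⟨q, rfl⟩ : ∃ q, p = q + 1 := ⟨p - 1, by omega⟩
    obtain ⟨h, h', hbg, hbg', hrel⟩ := RM.homotopy f d hfhom hfann q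
    have hempty : IsEmpty (RM.ι (q+2)) := hp.2 (q+2) (by omega)
    have hzero : ∀ x : RM.ι (q+1) →₀ MvPolynomial (Fin n) k,
        f • x = h (RM.diff q x) := by
      intro x
      have h0 : h' x = 0 := by
        ext s
        exact (hempty.false s).elim
      have hthis := hrel x
      rw [h0, map_zero] at hthis
      exact sub_eq_zero.mp hthis.symm
    have key : ∀ t0 : RM.ι (q+1), ∃ s : RM.ι q, RM.dg (q+1) t0 ≤ RM.dg q s + d := by
      intro t0
      by_contra hc
      push_neg at hc
      have hcoord : ∀ s : RM.ι q, h (Finsupp.single s 1) t0 = 0 := by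
        intro s
        have hm := (mem_freePiece_iff.mp (hbg s)) t0
        rw [polyPiece_neg (by have := hc s; omega)] at hm
        simpa using hm
      have hall : ∀ y : RM.ι q →₀ MvPolynomial (Fin n) k, h y t0 = 0 := by
        intro y
        rw [finsupp_eq_sum y, map_sum, Finsupp.finset_sum_apply]
        refine Finset.sum_eq_zero fun s _ => ?_
        rw [map_smul, Finsupp.smul_apply, hcoord s, smul_zero]
      have hf : f = 0 := by
        have hcg := congrArg (fun z => z t0) (hzero (Finsupp.single t0 1))
        rw [hall, Finsupp.smul_apply, Finsupp.single_eq_same, smul_eq_mul, mul_one] at hcg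
        exact hcg
      exact hf0 hf
    have hT : RM.T (q+1) ≤ RM.T q + (((d : ℤ)) : WithBot ℤ) := by
      unfold MinFreeRes.T
      apply Finset.sup_le
      intro t _
      obtain ⟨s, hs⟩ := key t
      calc ((RM.dg (q+1) t : ℤ) : WithBot ℤ) ≤ ((RM.dg q s + (d : ℤ) : ℤ) : WithBot ℤ) := by
            exact_mod_cast hs
        _ = ((RM.dg q s : ℤ) : WithBot ℤ) + (((d : ℤ)) : WithBot ℤ) := by
            rw [← WithBot.coe_add]
        _ ≤ _ + (((d : ℤ)) : WithBot ℤ) :=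
            add_le_add_left (Finset.le_sup (f := fun t => ((RM.dg q t : ℤ) : WithBot ℤ)) (Finset.mem_univ s)) _
    rw [MinFreeRes.reg, Finset.range_add_one, Finset.sup_insert]
    apply sup_le
    · have h1 : RM.T (q+1) + ((-(((q:ℤ)+1)) : ℤ) : WithBot ℤ) ≤
          RM.T q + (((d : ℤ) - ((q:ℤ)+1) : ℤ) : WithBot ℤ) := by
        calc RM.T (q+1) + ((-(((q:ℤ)+1)) : ℤ) : WithBot ℤ)
            ≤ (RM.T q + (((d : ℤ)) : WithBot ℤ)) + ((-(((q:ℤ)+1)) : ℤ) : WithBot ℤ) :=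
              add_le_add_left hT _
          _ = RM.T q + (((d : ℤ) - ((q:ℤ)+1) : ℤ) : WithBot ℤ) := by
              rw [add_assoc, ← WithBot.coe_add, ← sub_eq_add_neg]
      refine le_trans ?_ (le_max_right _ _)
      simp only [Nat.add_sub_cancel]
      convert h1 using 3 <;> push_cast <;> ring
    · exact le_max_left _ _
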